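/- Let X be a nonempty finite type, let p, q be probability vectors on X with q x > 0 for all x, let γ ∈ (0,1), let R_max ≥ 0, and let R : X → ℝ satisfy 0 ≤ R(x) ≤ R_max for all x. Let X₁, …, X_N be independent X-valued random variables each distributed according to q, and define the importance sampling estimator Ĵ_IS = (1/((1−γ)N)) ∑_{n=1}^N w(X_n) R(X_n), where w(x) = p(x)/q(x). Then Var[Ĵ_IS] ≤ (R_max/(1−γ))² · D₂(p‖q)/N, where D₂(p‖q) = ∑ x, (p x)² / (q x) is the exponentiated 2-Rényi divergence. -/

import Mathlib

open MeasureTheory ProbabilityTheory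

/-- Variance bound for the importance sampling estimator: if `X₁, …, X_N` are i.i.d.
with law `q` on a finite type, `w x = p x / q x`, `0 ≤ R x ≤ R_max`, and
`Ĵ_IS = (1/((1−γ)N)) ∑ₙ w(Xₙ) R(Xₙ)`, then
`Var[Ĵ_IS] ≤ (R_max/(1−γ))² · D₂(p‖q)/N`. -/
theorem importance_sampling_variance_bound
    (X : Type*) [Fintype X] [Nonempty X] [MeasurableSpace X] [MeasurableSingletonClass X]
    (p q : X → ℝ)
    (hp_nonneg : ∀ x, 0 ≤ p x) (hp_sum : ∑ x, p x = 1)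
    (hq_pos : ∀ x, 0 < q x) (hq_sum : ∑ x, q x = 1)
    (γ : ℝ) (hγ0 : 0 < γ) (hγ1 : γ < 1)
    (Rmax : ℝ) (hRmax : 0 ≤ Rmax)
    (R : X → ℝ) (hR_nonneg : ∀ x, 0 ≤ R x) (hR_le : ∀ x, R x ≤ Rmax)
    (N : ℕ) (hN : 1 ≤ N)
    (Ω : Type*) [MeasurableSpace Ω] (Pr : Measure Ω) [IsProbabilityMeasure Pr]
    (Xs : Fin N → Ω → X) (hmeas : ∀ n, Measurable (Xs n))
    (hindep : iIndepFun (m := fun _ => ‹MeasurableSpace X›) Xs Pr)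
    (hlaw : ∀ n : Fin N, ∀ x : X, Pr (Xs n ⁻¹' {x}) = ENNReal.ofReal (q x)) :
    variance (fun ω =>
        (1 / ((1 - γ) * N)) * ∑ n : Fin N, (p (Xs n ω) / q (Xs n ω)) * R (Xs n ω)) Pr ≤
      (Rmax / (1 - γ)) ^ 2 * (∑ x, (p x) ^ 2 / q x) / N := by
  classical
  have hγ : (0:ℝ) < 1 - γ := by linarith
  have hNpos : (0:ℝ) < N := by exact_mod_cast Nat.lt_of_lt_of_le Nat.zero_lt_one hN
  set f : X → ℝ := fun x => p x / q x * R x with hf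
  have hfmeas : Measurable f := measurable_of_countable f
  set Y : Fin N → Ω → ℝ := fun n ω => f (Xs n ω) with hY
  set C : ℝ := ∑ x, |f x| with hC
  have hbound : ∀ n, ∀ ω, ‖Y n ω‖ ≤ C := by
    intro n ω
    rw [Real.norm_eq_abs]
    exact Finset.single_le_sum (f := fun x => |f x|) (fun x _ => abs_nonneg _)
      (Finset.mem_univ (Xs n ω))
  have hYmeas : ∀ n, Measurable (Y n) := fun n => hfmeas.comp (hmeas n)
  have hmem : ∀ n, MemLp (Y n) 2 Pr := fun n =>
    MemLp.of_bound (hYmeas n).aestronglyMeasurable C (Filter.Eventually.of_forall (hbound n))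
  have hint : ∀ n (g : X → ℝ), ∫ ω, g (Xs n ω) ∂Pr = ∑ x, q x * g x := by
    intro n g
    have hmg : Measurable g := measurable_of_countable g
    rw [← integral_map (hmeas n).aemeasurable hmg.aestronglyMeasurable]
    have : IsFiniteMeasure (Pr.map (Xs n)) := by
      exact Measure.isFiniteMeasure_map Pr (Xs n)
    rw [integral_fintype (Integrable.of_finite)]
    refine Finset.sum_congr rfl fun x _ => ?_
    rw [measureReal_def, Measure.map_apply (hmeas n) (measurableSet_singleton x), hlaw n x,
      ENNReal.toReal_ofReal (hq_pos x).le, smul_eq_mul]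
  -- variance of each Y n
  have hvar : ∀ n, variance (Y n) Pr ≤ Rmax ^ 2 * ∑ x, (p x) ^ 2 / q x := by
    intro n
    refine le_trans (variance_le_expectation_sq (hYmeas n).aestronglyMeasurable) ?_
    have : Pr[(Y n) ^ 2] = ∑ x, q x * (f x) ^ 2 := hint n (fun x => (f x) ^ 2)
    rw [this, Finset.mul_sum]
    refine Finset.sum_le_sum fun x _ => ?_
    have hq := hq_pos x
    have : q x * f x ^ 2 = (p x) ^ 2 / q x * (R x) ^ 2 := by
      simp only [hf]
      field_simp
    rw [this]
    have h1 : (R x) ^ 2 ≤ Rmax ^ 2 := pow_le_pow_left₀ (hR_nonneg x) (hR_le x) 2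
    have h2 : 0 ≤ (p x) ^ 2 / q x := div_nonneg (sq_nonneg _) hq.le
    calc (p x) ^ 2 / q x * (R x) ^ 2 ≤ (p x) ^ 2 / q x * Rmax ^ 2 :=
          mul_le_mul_of_nonneg_left h1 h2
      _ = Rmax ^ 2 * ((p x) ^ 2 / q x) := by ring
  -- variance of the sum
  have hpair : Set.Pairwise (↑(Finset.univ : Finset (Fin N)))
      fun i j => IndepFun (Y i) (Y j) Pr := by
    intro i _ j _ hij
    exact (hindep.indepFun hij).comp hfmeas hfmeas
  have hsum : variance (∑ n : Fin N, Y n) Pr = ∑ n : Fin N, variance (Y n) Pr :=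
    IndepFun.variance_sum (fun n _ => hmem n) hpair
  have hrewrite : (fun ω =>
        (1 / ((1 - γ) * N)) * ∑ n : Fin N, (p (Xs n ω) / q (Xs n ω)) * R (Xs n ω))
      = fun ω => (1 / ((1 - γ) * N)) * (∑ n : Fin N, Y n) ω := by
    funext ω
    simp [hY, hf]
  rw [hrewrite, variance_const_mul, hsum]
  have hsumle : ∑ n : Fin N, variance (Y n) Pr ≤ N * (Rmax ^ 2 * ∑ x, (p x) ^ 2 / q x) := by
    calc ∑ n : Fin N, variance (Y n) Pr ≤ ∑ _n : Fin N, Rmax ^ 2 * ∑ x, (p x) ^ 2 / q x :=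
          Finset.sum_le_sum fun n _ => hvar n
      _ = N * (Rmax ^ 2 * ∑ x, (p x) ^ 2 / q x) := by simp [Finset.sum_const, mul_comm]
  have hc2 : (0:ℝ) ≤ (1 / ((1 - γ) * N)) ^ 2 := sq_nonneg _
  calc (1 / ((1 - γ) * ↑N)) ^ 2 * ∑ n : Fin N, variance (Y n) Pr
      ≤ (1 / ((1 - γ) * ↑N)) ^ 2 * (N * (Rmax ^ 2 * ∑ x, (p x) ^ 2 / q x)) :=
        mul_le_mul_of_nonneg_left hsumle hc2
    _ = (Rmax / (1 - γ)) ^ 2 * (∑ x, (p x) ^ 2 / q x) / N := by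
        field_simp
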